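/- Let r > 4 and 2 < α ≤ 3. For any finite A ⊂ ℤ² and ℓ ≥ 0, the number of edge-boundary pairs of admissible ℓ-cubes satisfies |∂𝔠_ℓ(A)| ≤ Q_ℓ(A) / (b₆ · 2^{rℓ(4-α)}), where b₆ = 1/(16·3^α). -/

import Mathlib

/-- Long-range interaction in `ℤ²`: `|x - y|^{-α}` with Euclidean distance. -/
noncomputable def Jint2 (α : ℝ) (p q : ℤ × ℤ) : ℝ :=
  (Real.sqrt (((p.1 - q.1 : ℤ) : ℝ) ^ 2 + ((p.2 - q.2 : ℤ) : ℝ) ^ 2)) ^ (-α)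

/-- The cube of side `s` in `ℤ²` with lower corner `s • x`. -/
noncomputable def cube2 (s : ℕ) (x : ℤ × ℤ) : Finset (ℤ × ℤ) :=
  Finset.Ico ((s : ℤ) * x.1) ((s : ℤ) * (x.1 + 1)) ×ˢ
    Finset.Ico ((s : ℤ) * x.2) ((s : ℤ) * (x.2 + 1))

/-- The `ℓ`-cube indexed by `x`, shrunk by an outer layer of thickness `2^{r(ℓ-1)}`. -/
noncomputable def hatcube2 (r ℓ : ℕ) (x : ℤ × ℤ) : Finset (ℤ × ℤ) :=
  Finset.Ico ((2 ^ (r * ℓ) : ℤ) * x.1 + 2 ^ (r * ℓ) / 2 ^ r)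
             ((2 ^ (r * ℓ) : ℤ) * (x.1 + 1) - 2 ^ (r * ℓ) / 2 ^ r) ×ˢ
  Finset.Ico ((2 ^ (r * ℓ) : ℤ) * x.2 + 2 ^ (r * ℓ) / 2 ^ r)
             ((2 ^ (r * ℓ) : ℤ) * (x.2 + 1) - 2 ^ (r * ℓ) / 2 ^ r)


set_option maxHeartbeats 1000000

private lemma ediv_eq_self' {n a b : ℤ} (hn : 0 < n) (h1 : n * a ≤ b) (h2 : b < n * (a+1)) :
    b / n = a := by
  have hne : n ≠ 0 := hn.ne'
  have hub : b / n ≤ a := by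
    have h3 : b ≤ (n - 1) + a * n := by nlinarith
    have h4 : ((n-1) + a * n) / n = (n-1)/n + a := Int.add_mul_ediv_right _ _ hne
    have h5 : (n-1)/n = 0 := Int.ediv_eq_zero_of_lt (by omega) (by omega)
    calc b / n ≤ ((n-1) + a*n)/n := Int.ediv_le_ediv hn h3
      _ = a := by rw [h4, h5]; ring
  have hlb : a ≤ b / n := by
    calc a = (n * a) / n := (Int.mul_ediv_cancel_left a hne).symm
      _ ≤ b / n := Int.ediv_le_ediv hn h1
  omega

private lemma adj_mem {x x' : ℤ × ℤ} (h : |x.1 - x'.1| + |x.2 - x'.2| = 1) :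
    x' ∈ Finset.Icc (x.1-1) (x.1+1) ×ˢ Finset.Icc (x.2-1) (x.2+1) := by
  have h1 := abs_le.mp (show |x.1 - x'.1| ≤ 1 by linarith [abs_nonneg (x.2 - x'.2)])
  have h2 := abs_le.mp (show |x.2 - x'.2| ≤ 1 by linarith [abs_nonneg (x.1 - x'.1)])
  simp only [Finset.mem_product, Finset.mem_Icc]
  omega

private lemma cube2_card (s : ℕ) (x : ℤ × ℤ) : (cube2 s x).card = s * s := by
  have h : ∀ a : ℤ, (Finset.Ico ((s:ℤ) * a) ((s:ℤ) * (a+1))).card = s := by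
    intro a
    rw [Int.card_Ico, show (s:ℤ) * (a+1) - s*a = s by ring, Int.toNat_natCast]
  simp [cube2, Finset.card_product, h]

private lemma filter_lower {C Ch : Finset (ℤ×ℤ)} (h : Ch ⊆ C) (P : ℤ×ℤ → Prop) [DecidablePred P] :
    (C.filter P).card + Ch.card ≤ (Ch.filter P).card + C.card := by
  have hsub : C.filter P ⊆ (Ch.filter P) ∪ (C \ Ch) := by
    intro p hp
    simp only [Finset.mem_filter, Finset.mem_union, Finset.mem_sdiff] at *
    by_cases hc : p ∈ Ch
    · exact Or.inl ⟨hc, hp.2⟩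
    · exact Or.inr ⟨hp.1, hc⟩
  have h1 := Finset.card_le_card hsub
  have h2 := Finset.card_union_le (Ch.filter P) (C \ Ch)
  have h3 : (C \ Ch).card = C.card - Ch.card := Finset.card_sdiff_of_subset h
  have h4 := Finset.card_le_card h
  omega

private lemma core (r : ℕ) (hr : 4 < r) (α : ℝ) (hα1 : 2 < α) (hα2 : α ≤ 3)
    (A : Finset (ℤ × ℤ)) (ℓ : ℕ) (x x' : ℤ × ℤ)
    (hadj : |x.1 - x'.1| + |x.2 - x'.2| = 1)
    (hx : (cube2 (2 ^ (r * ℓ)) x).card ≤ 2 * ((cube2 (2 ^ (r * ℓ)) x).filter (· ∈ A)).card)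
    (hx' : 2 * ((cube2 (2 ^ (r * ℓ)) x').filter (· ∈ A)).card < (cube2 (2 ^ (r * ℓ)) x').card) :
    (1 / (16 * 3 ^ α)) * (2 : ℝ) ^ (((r * ℓ : ℕ) : ℝ) * (4 - α)) ≤
      ∑ p ∈ (hatcube2 r ℓ x).filter (· ∈ A),
        ∑ q ∈ (hatcube2 r ℓ x').filter (· ∉ A), Jint2 α p q := by
  set L : ℤ := 2 ^ (r * ℓ) with hLdef
  set t : ℤ := L / 2 ^ r with htdef
  have hLpos : (0:ℤ) < L := by positivity
  have hp2 : (0:ℤ) < 2 ^ r := by positivity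
  have h32 : (32:ℤ) ≤ 2 ^ r := by
    calc (32:ℤ) = 2 ^ 5 := by norm_num
      _ ≤ 2 ^ r := pow_le_pow_right₀ (by norm_num) (by omega)
  have ht0 : 0 ≤ t := Int.ediv_nonneg hLpos.le hp2.le
  have ht32 : 32 * t ≤ L := by
    have h1 : 2 ^ r * t + L % 2 ^ r = L := Int.mul_ediv_add_emod L (2 ^ r)
    have h2 : 0 ≤ L % 2 ^ r := Int.emod_nonneg L hp2.ne'
    nlinarith
  -- hatcube is inside cube
  have hsub : ∀ y : ℤ × ℤ, hatcube2 r ℓ y ⊆ cube2 (2 ^ (r * ℓ)) y := by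
    intro y p hp
    simp only [hatcube2, cube2, Finset.mem_product, Finset.mem_Ico] at hp ⊢
    push_cast at hp ⊢
    rw [← hLdef, ← htdef] at hp
    refine ⟨⟨?_, ?_⟩, ?_, ?_⟩ <;> linarith [hp.1.1, hp.1.2, hp.2.1, hp.2.2]
  -- hatcube card
  have hhatcard : ∀ y : ℤ × ℤ, ((hatcube2 r ℓ y).card : ℤ) = (L - 2*t)^2 := by
    intro y
    have h : ∀ a : ℤ, ((Finset.Ico (L * a + t) (L * (a+1) - t)).card : ℤ) = L - 2*t := by
      intro a
      rw [Int.card_Ico]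
      rw [Int.toNat_of_nonneg (by linarith)]
      ring
    simp only [hatcube2, Finset.card_product]
    push_cast
    rw [← hLdef, ← htdef]
    rw [h y.1, h y.2]
    ring
  -- cardinalities of the filtered hat cubes, in ℤ
  set S := (hatcube2 r ℓ x).filter (· ∈ A) with hS
  set T := (hatcube2 r ℓ x').filter (· ∉ A) with hT
  have hScard : 3 * L^2 ≤ 8 * (S.card : ℤ) := by
    have h1 := filter_lower (hsub x) (· ∈ A)
    have h2 : S.card = ((hatcube2 r ℓ x).filter (· ∈ A)).card := rfl
    have hc1 : ((cube2 (2^(r*ℓ)) x).card : ℤ) = L^2 := by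
      rw [cube2_card]; push_cast; rw [← hLdef]; ring
    have hhc := hhatcard x
    have hx1 : ((cube2 (2^(r*ℓ)) x).card : ℤ) ≤ 2 * (((cube2 (2^(r*ℓ)) x).filter (· ∈ A)).card : ℤ) := by
      exact_mod_cast hx
    have h1' : (((cube2 (2^(r*ℓ)) x).filter (· ∈ A)).card : ℤ) + ((hatcube2 r ℓ x).card : ℤ)
        ≤ (S.card : ℤ) + ((cube2 (2^(r*ℓ)) x).card : ℤ) := by exact_mod_cast h1
    nlinarith
  have hTcard : 3 * L^2 ≤ 8 * (T.card : ℤ) := by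
    have h1 := filter_lower (hsub x') (· ∉ A)
    have hc1 : ((cube2 (2^(r*ℓ)) x').card : ℤ) = L^2 := by
      rw [cube2_card]; push_cast; rw [← hLdef]; ring
    have hhc := hhatcard x'
    -- complement count in the full cube
    have hsplit : ((cube2 (2^(r*ℓ)) x').filter (· ∈ A)).card
        + ((cube2 (2^(r*ℓ)) x').filter (· ∉ A)).card = (cube2 (2^(r*ℓ)) x').card :=
      Finset.card_filter_add_card_filter_not (fun p => p ∈ A)
    have hx1 : 2 * (((cube2 (2^(r*ℓ)) x').filter (· ∈ A)).card : ℤ) < ((cube2 (2^(r*ℓ)) x').card : ℤ) := by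
      exact_mod_cast hx'
    have hsplit' : (((cube2 (2^(r*ℓ)) x').filter (· ∈ A)).card : ℤ)
        + (((cube2 (2^(r*ℓ)) x').filter (· ∉ A)).card : ℤ) = ((cube2 (2^(r*ℓ)) x').card : ℤ) := by
      exact_mod_cast hsplit
    have h1' : (((cube2 (2^(r*ℓ)) x').filter (· ∉ A)).card : ℤ) + ((hatcube2 r ℓ x').card : ℤ)
        ≤ (T.card : ℤ) + ((cube2 (2^(r*ℓ)) x').card : ℤ) := by exact_mod_cast h1
    nlinarith
  -- pointwise lower bound on the interaction
  have hJ : ∀ p ∈ S, ∀ q ∈ T, ((3:ℝ) * (L:ℝ)) ^ (-α) ≤ Jint2 α p q := by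
    intro p hp q hq
    simp only [hS, Finset.mem_filter] at hp
    simp only [hT, Finset.mem_filter] at hq
    have hpc := hsub x hp.1
    have hqc := hsub x' hq.1
    simp only [cube2, Finset.mem_product, Finset.mem_Ico] at hpc hqc
    push_cast at hpc hqc
    rw [← hLdef] at hpc hqc
    have hne : p ≠ q := by rintro rfl; exact hq.2 hp.2
    have habs1 : |x.1 - x'.1| ≤ 1 := by
      have := abs_nonneg (x.2 - x'.2); omega
    have habs2 : |x.2 - x'.2| ≤ 1 := by
      have := abs_nonneg (x.1 - x'.1); omega
    have hb1 := abs_le.mp habs1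
    have hb2 := abs_le.mp habs2
    have e1 : L * (x.1 - x'.1) ≤ L * 1 := mul_le_mul_of_nonneg_left hb1.2 hLpos.le
    have e2 : L * (-1) ≤ L * (x.1 - x'.1) := mul_le_mul_of_nonneg_left hb1.1 hLpos.le
    have e3 : L * (x.2 - x'.2) ≤ L * 1 := mul_le_mul_of_nonneg_left hb2.2 hLpos.le
    have e4 : L * (-1) ≤ L * (x.2 - x'.2) := mul_le_mul_of_nonneg_left hb2.1 hLpos.le
    have hu1 : p.1 - q.1 ≤ 2*L - 1 := by linarith [hpc.1.1, hpc.1.2, hqc.1.1, hqc.1.2]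
    have hl1 : -(2*L) + 1 ≤ p.1 - q.1 := by linarith [hpc.1.1, hpc.1.2, hqc.1.1, hqc.1.2]
    have hu2 : p.2 - q.2 ≤ 2*L - 1 := by linarith [hpc.2.1, hpc.2.2, hqc.2.1, hqc.2.2]
    have hl2 : -(2*L) + 1 ≤ p.2 - q.2 := by linarith [hpc.2.1, hpc.2.2, hqc.2.1, hqc.2.2]
    have hd1 : (p.1 - q.1)^2 ≤ (2*L)^2 := by
      nlinarith [mul_nonneg (show (0:ℤ) ≤ 2*L - (p.1-q.1) by linarith) (show (0:ℤ) ≤ 2*L + (p.1-q.1) by linarith)]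
    have hd2 : (p.2 - q.2)^2 ≤ (2*L)^2 := by
      nlinarith [mul_nonneg (show (0:ℤ) ≤ 2*L - (p.2-q.2) by linarith) (show (0:ℤ) ≤ 2*L + (p.2-q.2) by linarith)]
    have hdist : (p.1 - q.1)^2 + (p.2 - q.2)^2 ≤ (3*L)^2 := by nlinarith
    have hdpos : 1 ≤ (p.1 - q.1)^2 + (p.2 - q.2)^2 := by
      have : p.1 ≠ q.1 ∨ p.2 ≠ q.2 := by
        by_contra hcon; push_neg at hcon; exact hne (Prod.ext hcon.1 hcon.2)
      rcases this with h | h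
      · nlinarith [sq_nonneg (p.2 - q.2), Int.one_le_abs (sub_ne_zero.mpr h), sq_abs (p.1-q.1), sq_nonneg (|p.1-q.1| - 1)]
      · nlinarith [sq_nonneg (p.1 - q.1), Int.one_le_abs (sub_ne_zero.mpr h), sq_abs (p.2-q.2), sq_nonneg (|p.2-q.2| - 1)]
    set D := Real.sqrt (((p.1 - q.1 : ℤ) : ℝ) ^ 2 + ((p.2 - q.2 : ℤ) : ℝ) ^ 2) with hD
    have hD1 : (1:ℝ) ≤ D := by
      rw [hD, show (1:ℝ) = Real.sqrt 1 by simp]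
      apply Real.sqrt_le_sqrt
      exact_mod_cast hdpos
    have hD3 : D ≤ 3 * (L:ℝ) := by
      rw [hD, show (3:ℝ) * (L:ℝ) = Real.sqrt ((3*(L:ℝ))^2) from (Real.sqrt_sq (by positivity)).symm]
      apply Real.sqrt_le_sqrt
      push_cast
      exact_mod_cast hdist
    unfold Jint2
    rw [← hD]
    exact Real.rpow_le_rpow_of_nonpos (by linarith) hD3 (by linarith)
  -- sum the pointwise bound
  have hsum : (S.card : ℝ) * (T.card : ℝ) * ((3:ℝ) * (L:ℝ)) ^ (-α) ≤ ∑ p ∈ S, ∑ q ∈ T, Jint2 α p q := by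
    have h1 : ∑ p ∈ S, ∑ q ∈ T, ((3:ℝ)*(L:ℝ))^(-α) ≤ ∑ p ∈ S, ∑ q ∈ T, Jint2 α p q :=
      Finset.sum_le_sum fun p hp => Finset.sum_le_sum fun q hq => hJ p hp q hq
    calc (S.card : ℝ) * (T.card : ℝ) * ((3:ℝ)*(L:ℝ))^(-α)
        = ∑ p ∈ S, ∑ q ∈ T, ((3:ℝ)*(L:ℝ))^(-α) := by
          simp [Finset.sum_const, nsmul_eq_mul]; ring
      _ ≤ _ := h1
  -- final arithmetic
  have hLr : ((L:ℝ)) = (2:ℝ) ^ (r*ℓ) := by rw [hLdef]; push_cast; ring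
  have hLrpos : (0:ℝ) < (L:ℝ) := by exact_mod_cast hLpos
  have hrw : (2 : ℝ) ^ (((r * ℓ : ℕ) : ℝ) * (4 - α)) = (L:ℝ) ^ ((4:ℝ) - α) := by
    rw [Real.rpow_mul (by norm_num), Real.rpow_natCast, ← hLr]
  rw [hrw]
  have hsplit : (L:ℝ) ^ ((4:ℝ) - α) = (L:ℝ)^(4:ℕ) * (L:ℝ) ^ (-α) := by
    rw [show (4:ℝ) - α = ((4:ℕ):ℝ) + (-α) by push_cast; ring, Real.rpow_add hLrpos, Real.rpow_natCast]
  have hmul : ((3:ℝ) * (L:ℝ)) ^ (-α) = (3:ℝ)^(-α) * (L:ℝ)^(-α) :=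
    Real.mul_rpow (by norm_num) hLrpos.le
  have h3α : (3:ℝ)^(-α) = 1 / (3:ℝ)^α := by
    rw [Real.rpow_neg (by norm_num)]; ring
  have hkey : (L:ℝ)^(4:ℕ) / 16 ≤ (S.card : ℝ) * (T.card : ℝ) := by
    have ha : 3 * (L:ℝ)^2 ≤ 8 * (S.card : ℝ) := by exact_mod_cast hScard
    have hb : 3 * (L:ℝ)^2 ≤ 8 * (T.card : ℝ) := by exact_mod_cast hTcard
    nlinarith [sq_nonneg ((L:ℝ)^2), hLrpos]
  have hpos2 : (0:ℝ) < (3:ℝ)^(-α) * (L:ℝ)^(-α) := by positivity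
  calc (1 / (16 * 3 ^ α)) * ((L:ℝ) ^ ((4:ℝ) - α))
      = ((L:ℝ)^(4:ℕ) / 16) * ((3:ℝ)^(-α) * (L:ℝ)^(-α)) := by
        rw [hsplit, h3α]; ring
    _ ≤ ((S.card : ℝ) * (T.card : ℝ)) * ((3:ℝ)^(-α) * (L:ℝ)^(-α)) :=
        mul_le_mul_of_nonneg_right hkey hpos2.le
    _ = (S.card : ℝ) * (T.card : ℝ) * ((3:ℝ) * (L:ℝ)) ^ (-α) := by rw [hmul]
    _ ≤ _ := hsum


private lemma mem_K (r ℓ : ℕ) (A : Finset (ℤ × ℤ)) (x : ℤ × ℤ)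
    (h : (cube2 (2 ^ (r * ℓ)) x).card ≤ 2 * ((cube2 (2 ^ (r * ℓ)) x).filter (· ∈ A)).card) :
    x ∈ A.image (fun p => (p.1 / (2 ^ (r * ℓ) : ℤ), p.2 / (2 ^ (r * ℓ) : ℤ))) := by
  have hLpos : (0:ℤ) < 2 ^ (r * ℓ) := by positivity
  have hcard : (cube2 (2 ^ (r * ℓ)) x).card = 2 ^ (r * ℓ) * 2 ^ (r * ℓ) := cube2_card _ _
  have hpos : 0 < ((cube2 (2 ^ (r * ℓ)) x).filter (· ∈ A)).card := by
    have h0 : 0 < (cube2 (2 ^ (r * ℓ)) x).card := by rw [hcard]; positivity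
    omega
  obtain ⟨p, hp⟩ := Finset.card_pos.mp hpos
  rw [Finset.mem_filter] at hp
  obtain ⟨hpc, hpA⟩ := hp
  simp only [cube2, Finset.mem_product, Finset.mem_Ico] at hpc
  push_cast at hpc
  refine Finset.mem_image.mpr ⟨p, hpA, ?_⟩
  have e1 : p.1 / (2 ^ (r * ℓ) : ℤ) = x.1 := ediv_eq_self' hLpos hpc.1.1 hpc.1.2
  have e2 : p.2 / (2 ^ (r * ℓ) : ℤ) = x.2 := ediv_eq_self' hLpos hpc.2.1 hpc.2.2
  exact Prod.ext e1 e2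

/-- `Q_ℓ(A)`. -/
noncomputable def Qlev (r : ℕ) (α : ℝ) (A : Finset (ℤ × ℤ)) (ℓ : ℕ) : ℝ :=
  ∑' x : ℤ × ℤ, ∑' x' : ℤ × ℤ,
    if |x.1 - x'.1| + |x.2 - x'.2| = 1 ∧
        (cube2 (2 ^ (r * ℓ)) x).card ≤
          2 * ((cube2 (2 ^ (r * ℓ)) x).filter (· ∈ A)).card ∧
        2 * ((cube2 (2 ^ (r * ℓ)) x').filter (· ∈ A)).card <
          (cube2 (2 ^ (r * ℓ)) x').card
    then ∑ p ∈ (hatcube2 r ℓ x).filter (· ∈ A),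
           ∑ q ∈ (hatcube2 r ℓ x').filter (· ∉ A), Jint2 α p q
    else 0

theorem stmt12 (r : ℕ) (hr : 4 < r) (α : ℝ) (hα1 : 2 < α) (hα2 : α ≤ 3)
    (A : Finset (ℤ × ℤ)) (ℓ : ℕ) :
    ∑' x : ℤ × ℤ, ∑' x' : ℤ × ℤ,
      (if |x.1 - x'.1| + |x.2 - x'.2| = 1 ∧
          (cube2 (2 ^ (r * ℓ)) x).card ≤
            2 * ((cube2 (2 ^ (r * ℓ)) x).filter (· ∈ A)).card ∧
          2 * ((cube2 (2 ^ (r * ℓ)) x').filter (· ∈ A)).card <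
            (cube2 (2 ^ (r * ℓ)) x').card
       then (1 : ℝ) else 0) ≤
      Qlev r α A ℓ / ((1 / (16 * 3 ^ α)) * (2 : ℝ) ^ (((r * ℓ : ℕ) : ℝ) * (4 - α))) := by
  classical
  set c : ℝ := (1 / (16 * 3 ^ α)) * (2 : ℝ) ^ (((r * ℓ : ℕ) : ℝ) * (4 - α)) with hcdef
  have hcpos : 0 < c := by rw [hcdef]; positivity
  rw [le_div_iff₀ hcpos]
  set f : ℤ × ℤ → ℤ × ℤ → ℝ := fun x x' =>
    if |x.1 - x'.1| + |x.2 - x'.2| = 1 ∧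
        (cube2 (2 ^ (r * ℓ)) x).card ≤
          2 * ((cube2 (2 ^ (r * ℓ)) x).filter (· ∈ A)).card ∧
        2 * ((cube2 (2 ^ (r * ℓ)) x').filter (· ∈ A)).card <
          (cube2 (2 ^ (r * ℓ)) x').card
    then (1 : ℝ) else 0 with hfdef
  set g : ℤ × ℤ → ℤ × ℤ → ℝ := fun x x' =>
    if |x.1 - x'.1| + |x.2 - x'.2| = 1 ∧
        (cube2 (2 ^ (r * ℓ)) x).card ≤
          2 * ((cube2 (2 ^ (r * ℓ)) x).filter (· ∈ A)).card ∧
        2 * ((cube2 (2 ^ (r * ℓ)) x').filter (· ∈ A)).card <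
          (cube2 (2 ^ (r * ℓ)) x').card
    then ∑ p ∈ (hatcube2 r ℓ x).filter (· ∈ A),
           ∑ q ∈ (hatcube2 r ℓ x').filter (· ∉ A), Jint2 α p q
    else 0 with hgdef
  have key : ∀ x x' : ℤ × ℤ, f x x' * c ≤ g x x' := by
    intro x x'
    by_cases h : |x.1 - x'.1| + |x.2 - x'.2| = 1 ∧
        (cube2 (2 ^ (r * ℓ)) x).card ≤
          2 * ((cube2 (2 ^ (r * ℓ)) x).filter (· ∈ A)).card ∧
        2 * ((cube2 (2 ^ (r * ℓ)) x').filter (· ∈ A)).card <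
          (cube2 (2 ^ (r * ℓ)) x').card
    · simp only [hfdef, hgdef, if_pos h, one_mul]
      exact core r hr α hα1 hα2 A ℓ x x' h.1 h.2.1 h.2.2
    · simp only [hfdef, hgdef, if_neg h, zero_mul, le_refl]
  have hKf : ∀ x x', f x x' ≠ 0 →
      x ∈ A.image (fun p => (p.1 / (2 ^ (r * ℓ) : ℤ), p.2 / (2 ^ (r * ℓ) : ℤ))) := by
    intro x x' hne
    simp only [hfdef] at hne
    by_cases h : |x.1 - x'.1| + |x.2 - x'.2| = 1 ∧
        (cube2 (2 ^ (r * ℓ)) x).card ≤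
          2 * ((cube2 (2 ^ (r * ℓ)) x).filter (· ∈ A)).card ∧
        2 * ((cube2 (2 ^ (r * ℓ)) x').filter (· ∈ A)).card <
          (cube2 (2 ^ (r * ℓ)) x').card
    · exact mem_K r ℓ A x h.2.1
    · exact absurd (if_neg h) hne
  have hKg : ∀ x x', g x x' ≠ 0 →
      x ∈ A.image (fun p => (p.1 / (2 ^ (r * ℓ) : ℤ), p.2 / (2 ^ (r * ℓ) : ℤ))) := by
    intro x x' hne
    simp only [hgdef] at hne
    by_cases h : |x.1 - x'.1| + |x.2 - x'.2| = 1 ∧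
        (cube2 (2 ^ (r * ℓ)) x).card ≤
          2 * ((cube2 (2 ^ (r * ℓ)) x).filter (· ∈ A)).card ∧
        2 * ((cube2 (2 ^ (r * ℓ)) x').filter (· ∈ A)).card <
          (cube2 (2 ^ (r * ℓ)) x').card
    · exact mem_K r ℓ A x h.2.1
    · exact absurd (if_neg h) hne
  have hNf : ∀ x x', f x x' ≠ 0 →
      x' ∈ Finset.Icc (x.1-1) (x.1+1) ×ˢ Finset.Icc (x.2-1) (x.2+1) := by
    intro x x' hne
    simp only [hfdef] at hne
    by_cases h : |x.1 - x'.1| + |x.2 - x'.2| = 1 ∧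
        (cube2 (2 ^ (r * ℓ)) x).card ≤
          2 * ((cube2 (2 ^ (r * ℓ)) x).filter (· ∈ A)).card ∧
        2 * ((cube2 (2 ^ (r * ℓ)) x').filter (· ∈ A)).card <
          (cube2 (2 ^ (r * ℓ)) x').card
    · exact adj_mem h.1
    · exact absurd (if_neg h) hne
  have hNg : ∀ x x', g x x' ≠ 0 →
      x' ∈ Finset.Icc (x.1-1) (x.1+1) ×ˢ Finset.Icc (x.2-1) (x.2+1) := by
    intro x x' hne
    simp only [hgdef] at hne
    by_cases h : |x.1 - x'.1| + |x.2 - x'.2| = 1 ∧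
        (cube2 (2 ^ (r * ℓ)) x).card ≤
          2 * ((cube2 (2 ^ (r * ℓ)) x).filter (· ∈ A)).card ∧
        2 * ((cube2 (2 ^ (r * ℓ)) x').filter (· ∈ A)).card <
          (cube2 (2 ^ (r * ℓ)) x').card
    · exact adj_mem h.1
    · exact absurd (if_neg h) hne
  have hsumf_inner : ∀ x, Summable (fun x' => f x x' * c) := by
    intro x
    apply summable_of_ne_finset_zero
      (s := Finset.Icc (x.1-1) (x.1+1) ×ˢ Finset.Icc (x.2-1) (x.2+1))
    intro x' hx'
    by_contra hne
    exact hx' (hNf x x' (fun h0 => hne (by rw [h0, zero_mul])))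
  have hsumg_inner : ∀ x, Summable (fun x' => g x x') := by
    intro x
    apply summable_of_ne_finset_zero
      (s := Finset.Icc (x.1-1) (x.1+1) ×ˢ Finset.Icc (x.2-1) (x.2+1))
    intro x' hx'
    by_contra hne
    exact hx' (hNg x x' hne)
  have hle_inner : ∀ x, ∑' x', f x x' * c ≤ ∑' x', g x x' := fun x =>
    Summable.tsum_le_tsum (fun x' => key x x') (hsumf_inner x) (hsumg_inner x)
  have houter_f : Summable (fun x => ∑' x', f x x' * c) := by
    apply summable_of_ne_finset_zero
      (s := A.image (fun p => (p.1 / (2 ^ (r * ℓ) : ℤ), p.2 / (2 ^ (r * ℓ) : ℤ))))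
    intro x hx
    have h0 : ∀ x', f x x' * c = 0 := by
      intro x'
      by_cases hz : f x x' = 0
      · rw [hz, zero_mul]
      · exact absurd (hKf x x' hz) hx
    rw [tsum_congr h0, tsum_zero]
  have houter_g : Summable (fun x => ∑' x', g x x') := by
    apply summable_of_ne_finset_zero
      (s := A.image (fun p => (p.1 / (2 ^ (r * ℓ) : ℤ), p.2 / (2 ^ (r * ℓ) : ℤ))))
    intro x hx
    have h0 : ∀ x', g x x' = 0 := by
      intro x'
      by_cases hz : g x x' = 0
      · exact hz
      · exact absurd (hKg x x' hz) hx
    rw [tsum_congr h0, tsum_zero]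
  calc (∑' x : ℤ × ℤ, ∑' x' : ℤ × ℤ, f x x') * c
      = ∑' x : ℤ × ℤ, ∑' x' : ℤ × ℤ, (f x x' * c) := by
        rw [← tsum_mul_right]
        exact tsum_congr fun x => (tsum_mul_right).symm
    _ ≤ ∑' x : ℤ × ℤ, ∑' x' : ℤ × ℤ, g x x' :=
        Summable.tsum_le_tsum hle_inner houter_f houter_g
    _ = Qlev r α A ℓ := rfl
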